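/- Let J be a d×d Jordan block with real eigenvalue λ ≠ 0 and let x ∈ ℝ^d be nonzero. Then |⟨J^n x, e₁⟩| / (‖J^n x‖·‖e₁‖) → 1 as n → ∞. -/

import Mathlib

open Filter Polynomial Finset

/-- The `d × d` Jordan block with eigenvalue `lam`. -/
def jordanBlock (d : ℕ) (lam : ℝ) : Matrix (Fin d) (Fin d) ℝ :=
  Matrix.of fun i j => if (j : ℕ) = (i : ℕ) then lam
    else if (j : ℕ) = (i : ℕ) + 1 then 1 else 0

def nmat (d : ℕ) : Matrix (Fin d) (Fin d) ℝ :=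
  Matrix.of fun i j => if (j : ℕ) = (i : ℕ) + 1 then 1 else 0

lemma nmat_pow (d m : ℕ) (i j : Fin d) :
    ((nmat d) ^ m) i j = if (j : ℕ) = (i : ℕ) + m then 1 else 0 := by
  induction m generalizing i j with
  | zero => simp [Matrix.one_apply, Fin.ext_iff, eq_comm]
  | succ m ih =>
    rw [pow_succ, Matrix.mul_apply]
    by_cases h : (j : ℕ) = (i : ℕ) + (m + 1)
    · have hlt : (i : ℕ) + m < d := by omega
      rw [Finset.sum_eq_single (⟨(i:ℕ) + m, hlt⟩ : Fin d)]
      · rw [ih]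
        simp [nmat, h, Nat.add_assoc]
      · intro l _ hl
        rw [ih]
        have : ¬ ((l : ℕ) = (i : ℕ) + m) := fun hc => hl (by ext; simp [hc])
        simp [this]
      · simp
    · rw [if_neg h]
      apply Finset.sum_eq_zero
      intro l _
      rw [ih]
      by_cases hl : (l : ℕ) = (i : ℕ) + m
      · simp [nmat, hl]; intro hc; omega
      · simp [hl]

lemma jordan_eq (d : ℕ) (lam : ℝ) : jordanBlock d lam = nmat d + lam • 1 := by
  ext i j
  by_cases h : (j : ℕ) = (i : ℕ)
  · have : j = i := by ext; exact h
    subst this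
    simp [jordanBlock, nmat, Matrix.one_apply, h]
  · have : ¬ (i = j) := fun hc => h (by rw [hc])
    simp [jordanBlock, nmat, Matrix.one_apply, h, this]

lemma jordan_pow_expand (d : ℕ) (lam : ℝ) (n : ℕ) :
    (jordanBlock d lam) ^ n =
      ∑ m ∈ Finset.range (n + 1), ((n.choose m : ℝ) * lam ^ (n - m)) • (nmat d) ^ m := by
  rw [jordan_eq]
  rw [(Commute.smul_right (Commute.one_right (nmat d)) lam).add_pow]
  apply Finset.sum_congr rfl
  intro m _
  rw [_root_.smul_pow, one_pow, mul_smul_comm, mul_one,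
    ← (Nat.cast_commute (n.choose m) (lam ^ (n - m) • (nmat d) ^ m)).eq,
    ← nsmul_eq_mul, ← Nat.cast_smul_eq_nsmul ℝ, smul_smul]

lemma jordan_pow_apply (d : ℕ) (lam : ℝ) (n : ℕ) (i j : Fin d) :
    ((jordanBlock d lam) ^ n) i j =
      if (i : ℕ) ≤ (j : ℕ) then
        (n.choose ((j : ℕ) - (i : ℕ)) : ℝ) * lam ^ (n - ((j : ℕ) - (i : ℕ)))
      else 0 := by
  rw [jordan_pow_expand, Matrix.sum_apply]
  simp only [Matrix.smul_apply, nmat_pow, smul_eq_mul]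
  by_cases hij : (i : ℕ) ≤ (j : ℕ)
  · rw [if_pos hij]
    by_cases hn : (j : ℕ) - (i : ℕ) ≤ n
    · rw [Finset.sum_eq_single ((j : ℕ) - (i : ℕ))]
      · have : (j : ℕ) = (i : ℕ) + ((j : ℕ) - (i : ℕ)) := by omega
        rw [if_pos this, mul_one]
      · intro m _ hm
        have : ¬ ((j : ℕ) = (i : ℕ) + m) := by omega
        rw [if_neg this, mul_zero]
      · intro hmem
        exact absurd (Finset.mem_range.2 (by omega)) hmem
    · rw [Nat.choose_eq_zero_of_lt (by omega), Nat.cast_zero, zero_mul]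
      apply Finset.sum_eq_zero
      intro m hm
      have : ¬ ((j : ℕ) = (i : ℕ) + m) := by
        have := Finset.mem_range.1 hm; omega
      rw [if_neg this, mul_zero]
  · rw [if_neg hij]
    apply Finset.sum_eq_zero
    intro m _
    have : ¬ ((j : ℕ) = (i : ℕ) + m) := by omega
    rw [if_neg this, mul_zero]

noncomputable def chP (m : ℕ) : Polynomial ℝ :=
  Polynomial.C ((m.factorial : ℝ)⁻¹) * descPochhammer ℝ m

lemma chP_eval (m n : ℕ) : (chP m).eval (n : ℝ) = (n.choose m : ℝ) := by
  rw [chP, eval_mul, eval_C, descPochhammer_eval_eq_descFactorial,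
    Nat.descFactorial_eq_factorial_mul_choose]
  push_cast
  rw [← mul_assoc, inv_mul_cancel₀ (by exact_mod_cast m.factorial_ne_zero), one_mul]

lemma chP_degree_le (m : ℕ) : (chP m).degree ≤ (m : WithBot ℕ) := by
  refine (degree_mul_le _ _).trans ?_
  have h2 : (descPochhammer ℝ m).degree ≤ (m : WithBot ℕ) := by
    simpa [descPochhammer_natDegree] using degree_le_natDegree (p := descPochhammer ℝ m)
  calc _ ≤ 0 + (m : WithBot ℕ) := add_le_add degree_C_le h2
    _ = m := zero_add _

lemma chP_coeff_self (m : ℕ) : (chP m).coeff m = ((m.factorial : ℝ))⁻¹ := by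
  rw [chP, coeff_C_mul]
  have h := (monic_descPochhammer ℝ m).coeff_natDegree
  rw [descPochhammer_natDegree] at h
  rw [h, mul_one]

lemma chP_coeff_of_lt {m l : ℕ} (h : m < l) : (chP m).coeff l = 0 :=
  coeff_eq_zero_of_natDegree_lt (lt_of_le_of_lt (natDegree_le_iff_degree_le.2 (chP_degree_le m)) h)

noncomputable def polyP (d : ℕ) (x : Fin d → ℝ) (lam : ℝ) (i : Fin d) : Polynomial ℝ :=
  ∑ j : Fin d, if (i : ℕ) ≤ (j : ℕ) then
    Polynomial.C (x j * lam⁻¹ ^ ((j : ℕ) - (i : ℕ))) * chP ((j : ℕ) - (i : ℕ)) else 0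

lemma polyP_eval (d : ℕ) (x : Fin d → ℝ) (lam : ℝ) (hlam : lam ≠ 0) (n : ℕ) (i : Fin d) :
    lam ^ n * (polyP d x lam i).eval (n : ℝ) =
      ∑ j : Fin d, ((jordanBlock d lam) ^ n) i j * x j := by
  rw [polyP, eval_finset_sum, Finset.mul_sum]
  apply Finset.sum_congr rfl
  intro j _
  rw [jordan_pow_apply]
  by_cases hij : (i : ℕ) ≤ (j : ℕ)
  · rw [if_pos hij, if_pos hij, eval_mul, eval_C, chP_eval]
    set m := (j : ℕ) - (i : ℕ) with hm
    by_cases hmn : m ≤ n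
    · rw [pow_sub₀ lam hlam hmn, inv_pow]
      ring
    · rw [Nat.choose_eq_zero_of_lt (by omega)]
      simp
  · rw [if_neg hij, if_neg hij]
    simp

lemma polyP_degree_le (d : ℕ) (x : Fin d → ℝ) (lam : ℝ) (k : ℕ)
    (hk : ∀ j : Fin d, k < (j : ℕ) → x j = 0) (i : Fin d) :
    (polyP d x lam i).degree ≤ ((k - (i : ℕ) : ℕ) : WithBot ℕ) := by
  refine (degree_sum_le _ _).trans ?_
  rw [Finset.sup_le_iff]
  intro j _
  by_cases hij : (i : ℕ) ≤ (j : ℕ)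
  · rw [if_pos hij]
    by_cases hjk : (j : ℕ) ≤ k
    · refine (degree_mul_le _ _).trans ?_
      refine le_trans (add_le_add degree_C_le (chP_degree_le _)) ?_
      rw [zero_add]
      exact_mod_cast (by omega : (j : ℕ) - (i : ℕ) ≤ k - (i : ℕ))
    · rw [hk j (by omega)]
      simp
  · rw [if_neg hij]
    simp

lemma polyP_eq_zero (d : ℕ) (x : Fin d → ℝ) (lam : ℝ) (k : ℕ)
    (hk : ∀ j : Fin d, k < (j : ℕ) → x j = 0) (i : Fin d) (hik : k < (i : ℕ)) :
    polyP d x lam i = 0 := by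
  rw [polyP]
  apply Finset.sum_eq_zero
  intro j _
  by_cases hij : (i : ℕ) ≤ (j : ℕ)
  · rw [if_pos hij, hk j (by omega)]
    simp
  · rw [if_neg hij]

lemma polyP_coeff (d : ℕ) (x : Fin d → ℝ) (lam : ℝ) (K : Fin d)
    (hk : ∀ j : Fin d, (K : ℕ) < (j : ℕ) → x j = 0) (i : Fin d) (hi : (i : ℕ) = 0) :
    (polyP d x lam i).coeff (K : ℕ) =
      x K * lam⁻¹ ^ (K : ℕ) * (((K : ℕ).factorial : ℝ))⁻¹ := by
  rw [polyP, finset_sum_coeff]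
  rw [Finset.sum_eq_single K]
  · rw [if_pos (by omega), coeff_C_mul, hi, Nat.sub_zero, chP_coeff_self, mul_assoc]
  · intro j _ hj
    by_cases hij : (i : ℕ) ≤ (j : ℕ)
    · rw [if_pos hij, coeff_C_mul, hi, Nat.sub_zero]
      rcases lt_or_gt_of_ne (fun hc : (j : ℕ) = (K : ℕ) => hj (by ext; exact hc)) with h | h
      · rw [chP_coeff_of_lt h, mul_zero]
      · rw [hk j h]
        simp
    · rw [if_neg hij]
      simp
  · intro h
    exact absurd (Finset.mem_univ K) h

lemma toEuclideanLin_coord (d : ℕ) (M : Matrix (Fin d) (Fin d) ℝ)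
    (v : EuclideanSpace ℝ (Fin d)) (i : Fin d) :
    Matrix.toEuclideanLin M v i = ∑ j : Fin d, M i j * v j := rfl

set_option maxHeartbeats 1000000 in
theorem stmt4 (d : ℕ) (hd : 0 < d) (lam : ℝ) (hlam : lam ≠ 0)
    (x : EuclideanSpace ℝ (Fin d)) (hx : x ≠ 0) :
    Filter.Tendsto (fun n : ℕ =>
      |(inner ℝ ((Matrix.toEuclideanLin ((jordanBlock d lam) ^ n)) x)
          (EuclideanSpace.single (⟨0, hd⟩ : Fin d) (1 : ℝ)) : ℝ)| /
        (‖(Matrix.toEuclideanLin ((jordanBlock d lam) ^ n)) x‖ *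
          ‖EuclideanSpace.single (⟨0, hd⟩ : Fin d) (1 : ℝ)‖))
      Filter.atTop (nhds 1) := by
  classical
  obtain ⟨i0, hi0⟩ : ∃ i, x i ≠ 0 := by
    by_contra h
    push_neg at h
    exact hx (by ext i; exact h i)
  set S : Finset (Fin d) := Finset.univ.filter (fun j => x j ≠ 0) with hS
  have hSne : S.Nonempty := ⟨i0, by simp [hS, hi0]⟩
  set K : Fin d := S.max' hSne with hKdef
  have hK : x K ≠ 0 := by
    have hmem : K ∈ S := S.max'_mem hSne
    rw [hS, Finset.mem_filter] at hmem
    exact hmem.2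
  have hKtop : ∀ j : Fin d, (K : ℕ) < (j : ℕ) → x j = 0 := by
    intro j hj
    by_contra h
    exact absurd (S.le_max' j (by simp [hS, h])) (not_le.2 hj)
  set e0 : Fin d := ⟨0, hd⟩ with he0
  set P : Fin d → Polynomial ℝ := polyP d (fun i => x i) lam with hPdef
  have hP0coeff : (P e0).coeff (K : ℕ)
      = x K * lam⁻¹ ^ (K : ℕ) * (((K : ℕ).factorial : ℝ))⁻¹ :=
    polyP_coeff d _ lam K hKtop e0 rfl
  have hcoeff_ne : (P e0).coeff (K : ℕ) ≠ 0 := by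
    rw [hP0coeff]
    exact mul_ne_zero (mul_ne_zero hK (pow_ne_zero _ (inv_ne_zero hlam)))
      (inv_ne_zero (by exact_mod_cast (K : ℕ).factorial_ne_zero))
  have hP0ne : P e0 ≠ 0 := fun h => hcoeff_ne (by rw [h, coeff_zero])
  have hP0deg : (P e0).degree = ((K : ℕ) : WithBot ℕ) := by
    refine le_antisymm ?_ (le_degree_of_ne_zero hcoeff_ne)
    have h := polyP_degree_le d (fun i => x i) lam (K : ℕ) hKtop e0
    rwa [show (K : ℕ) - (e0 : ℕ) = (K : ℕ) from Nat.sub_zero _] at h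
  have hdeglt : ∀ i : Fin d, i ≠ e0 → (P i).degree < (P e0).degree := by
    intro i hi
    have hi1 : 0 < (i : ℕ) := by
      rcases Nat.eq_zero_or_pos (i : ℕ) with h | h
      · exact absurd (by ext; simp [h, he0] : i = e0) hi
      · exact h
    rw [hP0deg]
    by_cases hik : (i : ℕ) ≤ (K : ℕ)
    · refine lt_of_le_of_lt (polyP_degree_le d (fun i => x i) lam (K : ℕ) hKtop i) ?_
      exact_mod_cast (by omega : (K : ℕ) - (i : ℕ) < (K : ℕ))
    · rw [hPdef, polyP_eq_zero d (fun i => x i) lam (K : ℕ) hKtop i (by omega), degree_zero]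
      exact WithBot.bot_lt_coe _
  set c : ℕ → ℝ := fun n => (P e0).eval (n : ℝ) with hc
  have hcev : ∀ᶠ n : ℕ in atTop, c n ≠ 0 :=
    tendsto_natCast_atTop_atTop.eventually (Polynomial.eventually_no_roots _ hP0ne)
  have hratio : ∀ i : Fin d, i ≠ e0 →
      Tendsto (fun n : ℕ => (P i).eval (n : ℝ) / c n) atTop (nhds 0) := fun i hi =>
    (Polynomial.div_tendsto_zero_of_degree_lt (P i) (P e0) (hdeglt i hi)).comp
      tendsto_natCast_atTop_atTop
  set w : ℕ → EuclideanSpace ℝ (Fin d) :=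
    fun n => (WithLp.equiv 2 (Fin d → ℝ)).symm (fun i => (P i).eval (n : ℝ)) with hw
  set u : ℕ → EuclideanSpace ℝ (Fin d) := fun n => (c n)⁻¹ • w n with hu
  have hucoord : ∀ (n : ℕ) (i : Fin d), u n i = (P i).eval (n : ℝ) / c n := by
    intro n i
    rw [hu]
    simp [hw, div_eq_inv_mul]
  have hpi : Tendsto (fun n : ℕ => (fun i => u n i : Fin d → ℝ)) atTop
      (nhds (Pi.single e0 (1 : ℝ))) := by
    rw [tendsto_pi_nhds]
    intro i
    by_cases hi : i = e0
    · subst hi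
      rw [Pi.single_eq_same]
      refine Tendsto.congr' ?_ tendsto_const_nhds
      filter_upwards [hcev] with n hn
      rw [hucoord n e0, div_self hn]
    · rw [Pi.single_eq_of_ne hi]
      refine Tendsto.congr' ?_ (hratio i hi)
      filter_upwards with n
      rw [hucoord n i]
  have hulim : Tendsto u atTop (nhds (EuclideanSpace.single e0 (1 : ℝ))) := by
    have hcont := ((PiLp.continuousLinearEquiv 2 ℝ (fun _ : Fin d => ℝ)).symm.continuous.tendsto
      (Pi.single e0 (1 : ℝ))).comp hpi
    exact hcont
  have hn1 : Tendsto (fun n : ℕ => ‖u n‖) atTop (nhds 1) := by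
    have := (continuous_norm.tendsto (EuclideanSpace.single e0 (1 : ℝ))).comp hulim
    simpa [Function.comp_def] using this
  have hn2 : Tendsto (fun n : ℕ => ‖u n‖⁻¹) atTop (nhds 1) := by
    simpa using hn1.inv₀ one_ne_zero
  refine Tendsto.congr' ?_ hn2
  filter_upwards [hcev] with n hn
  have ha : lam ^ n * c n ≠ 0 := mul_ne_zero (pow_ne_zero _ hlam) hn
  have hv : (Matrix.toEuclideanLin ((jordanBlock d lam) ^ n)) x = (lam ^ n * c n) • u n := by
    have h1 : (lam ^ n * c n) • u n = lam ^ n • w n := by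
      rw [hu, smul_smul, mul_assoc, mul_inv_cancel₀ hn, mul_one]
    rw [h1]
    ext i
    have h2 := polyP_eval d (fun i => x i) lam hlam n i
    rw [toEuclideanLin_coord]
    rw [← h2]
    rfl
  rw [hv]
  have hinner : (inner ℝ ((lam ^ n * c n) • u n) (EuclideanSpace.single e0 (1 : ℝ)) : ℝ)
      = (lam ^ n * c n) * (u n e0) := by
    rw [real_inner_smul_left]
    congr 1
    simp [EuclideanSpace.inner_single_right]
  have hue0 : u n e0 = 1 := by rw [hucoord n e0, div_self hn]
  have hnormv : ‖(lam ^ n * c n) • u n‖ = |lam ^ n * c n| * ‖u n‖ := by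
    rw [norm_smul, Real.norm_eq_abs]
  rw [hinner, hue0, mul_one, hnormv, EuclideanSpace.norm_single, norm_one, mul_one]
  exact (div_mul_cancel_left₀ (abs_ne_zero.2 ha) _).symm
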